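/- If L is an infinite regular language over a finite alphabet, then adh(L) is nonempty; moreover adh(L) contains an ultimately periodic infinite word. -/

import Mathlib

/-- `l` is a prefix of the infinite word `w`. -/
def IsPrefixOfInf {α : Type*} (l : List α) (w : ℕ → α) : Prop :=
  ∀ (i : ℕ) (h : i < l.length), l[i] = w i

/-- `b` is the image of the infinite word `a` under the morphism `γ`
(extended to infinite words by concatenation). -/
def IsInfImage {α β : Type*} (γ : α → List β) (a : ℕ → α) (b : ℕ → β) : Prop :=
  ∀ n : ℕ, IsPrefixOfInf (((List.range n).map a).flatMap γ) b

/-- `w = y · z^ω`. -/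
def UltPeriodicWith {α : Type*} (w : ℕ → α) (y z : List α) : Prop :=
  z ≠ [] ∧ ∀ m : ℕ, IsPrefixOfInf (y ++ (List.replicate m z).flatten) w

def UltimatelyPeriodic {α : Type*} (w : ℕ → α) : Prop :=
  ∃ y z : List α, UltPeriodicWith w y z

/-- `x` is a (finite, contiguous) factor of the infinite word `w`. -/
def InfFactorOf {α : Type*} (x : List α) (w : ℕ → α) : Prop :=
  ∃ i : ℕ, x = List.ofFn fun j : Fin x.length => w (i + j)

/-- adherence of a language -/
def Adherence {α : Type*} (L : Set (List α)) : Set (ℕ → α) :=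
  {x | ∀ n : ℕ, ∃ w ∈ L, (List.ofFn fun i : Fin n => x i) <+: w}

theorem stmt8 {α : Type*} [Fintype α] (L : Language α)
    (hreg : L.IsRegular) (hinf : Set.Infinite (L : Set (List α))) :
    (Adherence (L : Set (List α))).Nonempty ∧
      ∃ x ∈ Adherence (L : Set (List α)), UltimatelyPeriodic x := by
  obtain ⟨σ, _, M, rfl⟩ := hreg
  -- find a long word
  obtain ⟨u, hu, hulen⟩ : ∃ u ∈ M.accepts, Fintype.card σ ≤ u.length := by
    by_contra h
    push_neg at h
    exact hinf ((List.finite_length_lt α (Fintype.card σ)).subset fun l hl => h l hl)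
  obtain ⟨a, b, c, _, _, hb, hpump⟩ := M.pumping_lemma hu hulen
  have hbpos : 0 < b.length := List.length_pos_iff.mpr hb
  set w : ℕ → List α := fun m => a ++ (List.replicate m b).flatten with hw
  have hlen : ∀ m, a.length + m * b.length = (w m).length := by
    intro m; simp [hw, List.length_flatten, List.map_replicate, List.sum_replicate, smul_eq_mul,
      Nat.mul_comm]
  have hmono : ∀ m, w m <+: w (m + 1) := by
    intro m
    refine ⟨b, ?_⟩
    simp [hw, List.replicate_succ', List.append_assoc]
  have hmono' : ∀ {m m'}, m ≤ m' → w m <+: w m' := by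
    intro m m' h
    induction h with
    | refl => exact List.prefix_refl _
    | step h ih => exact ih.trans (hmono _)
  have hlenge : ∀ m, m ≤ (w m).length := by
    intro m
    rw [← hlen m]
    calc m = m * 1 := (Nat.mul_one m).symm
    _ ≤ m * b.length := Nat.mul_le_mul_left m hbpos
    _ ≤ _ := Nat.le_add_left _ _
  -- the infinite word
  set x : ℕ → α := fun n => (w (n + 1)).getD n (b.head hb) with hx
  have hstable : ∀ m n (h : n < (w m).length), (w m)[n] = x n := by
    intro m n h
    have hn : n < (w (n + 1)).length := lt_of_lt_of_le (Nat.lt_succ_self n) (hlenge (n + 1))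
    have : (w m)[n] = (w (n+1))[n]'hn := by
      rcases le_total m (n + 1) with hle | hle
      · exact (hmono' hle).getElem h
      · exact ((hmono' hle).getElem hn).symm
    rw [this, hx]
    exact (List.getD_eq_getElem _ _ hn).symm
  have hadh : x ∈ Adherence (M.accepts : Set (List α)) := by
    intro n
    refine ⟨w n ++ c, ?_, ?_⟩
    · apply hpump
      rw [hw]
      simp only [Language.mem_mul]
      exact ⟨a ++ (List.replicate n b).flatten, ⟨a, rfl, (List.replicate n b).flatten,
        Language.join_mem_kstar (by intro y hy; rw [List.eq_of_mem_replicate hy]; rfl), rfl⟩,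
        c, rfl, by simp⟩
    · refine List.IsPrefix.trans ?_ ((List.prefix_append (w n) c))
      have h1 : (List.ofFn fun i : Fin n => x i) = (w n).take n := by
        apply List.ext_getElem
        · simp [Nat.min_eq_left (hlenge n)]
        · intro i h1 h2
          simp only [List.getElem_ofFn, List.getElem_take]
          exact (hstable n i ((by simpa using h2 : i < n ∧ i < (w n).length).2)).symm
      rw [h1]
      exact List.take_prefix n (w n)
  refine ⟨⟨x, hadh⟩, x, hadh, a, b, hb, ?_⟩
  intro m i h
  exact hstable m i h
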